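/- Define the true advantage A⋆(s,a) := L(s,a) + γ ∫ V⋆(s₊) dρ(s₊ | s,a) − V⋆(s) and the model-based advantage Â_λ(s,a) := L(s,a) + Λ(s,a) + γ ∫ V⋆(s₊) dρ̂(s₊ | s,a) − V⋆(s). Assume A⋆ and Â_λ are continuous and nonnegative on S × A, and that for every s ∈ S there exist a, a' ∈ A with A⋆(s,a) = 0 and Â_λ(s,a') = 0. Then the following are equivalent: (i) there exist class 𝒦 functions α, β : [0,∞) → [0,∞) such that β(A⋆(s,a)) ≥ Â_λ(s,a) ≥ α(A⋆(s,a)) for all (s,a) ∈ S × A; (ii) for every s ∈ S, {a ∈ A : Â_λ(s,a) = 0} = {a ∈ A : A⋆(s,a) = 0}, i.e., the model-based MDP yields exactly the optimal policies of the true MDP. (Theorem 1.) -/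
import Mathlib


open MeasureTheory

/-- A class `𝒦` function `[0,∞) → [0,∞)`: vanishes at `0` and is strictly
increasing on `[0,∞)` (nonnegativity on `[0,∞)` then follows). -/
def IsClassK (α : ℝ → ℝ) : Prop :=
  α 0 = 0 ∧ StrictMonoOn α (Set.Ici 0)

/-- Theorem 1: with the true advantage
`A⋆(s,a) = L(s,a) + γ ∫ V⋆ dρ(·|s,a) − V⋆(s)` and the model-based advantage
`Â_λ(s,a) = L(s,a) + Λ(s,a) + γ ∫ V⋆ dρ̂(·|s,a) − V⋆(s)`, where
`Λ(s,a) = λ(s) − γ ∫ λ dρ̂(·|s,a)`, both continuous, nonnegative, and attaining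
`0` in every state, the sandwich bound by class `𝒦` functions
`β(A⋆) ≥ Â_λ ≥ α(A⋆)` holds iff the zero sets (minimizer sets) of `Â_λ(s,·)`
and `A⋆(s,·)` coincide for every `s`. -/
theorem stmt_9 {S A : Type*}
    [TopologicalSpace S] [CompactSpace S] [MeasurableSpace S] [Nonempty S]
    [TopologicalSpace A] [CompactSpace A] [Nonempty A]
    (ρ ρhat : S × A → Measure S)
    (hρ : ∀ p, IsProbabilityMeasure (ρ p))
    (hρhat : ∀ p, IsProbabilityMeasure (ρhat p))
    (γ : ℝ) (hγ : γ ∈ Set.Ioo (0 : ℝ) 1)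
    (L : S × A → ℝ)
    (Vstar lam : S → ℝ)
    (hVstar_meas : Measurable Vstar) (hlam_meas : Measurable lam)
    (hVstar_bdd : ∃ C : ℝ, ∀ s, |Vstar s| ≤ C)
    (hlam_bdd : ∃ C : ℝ, ∀ s, |lam s| ≤ C)
    (Λ : S × A → ℝ)
    (hΛ : ∀ p : S × A, Λ p = lam p.1 - γ * ∫ sn, lam sn ∂(ρhat p))
    (Astar Ahat : S × A → ℝ)
    (hAstar : ∀ p : S × A,
      Astar p = L p + γ * (∫ sn, Vstar sn ∂(ρ p)) - Vstar p.1)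
    (hAhat : ∀ p : S × A,
      Ahat p = L p + Λ p + γ * (∫ sn, Vstar sn ∂(ρhat p)) - Vstar p.1)
    (hAstar_cont : Continuous Astar) (hAhat_cont : Continuous Ahat)
    (hAstar_nonneg : ∀ p : S × A, 0 ≤ Astar p)
    (hAhat_nonneg : ∀ p : S × A, 0 ≤ Ahat p)
    (hAstar_zero : ∀ s : S, ∃ a : A, Astar (s, a) = 0)
    (hAhat_zero : ∀ s : S, ∃ a : A, Ahat (s, a) = 0) :
    (∃ α β : ℝ → ℝ, IsClassK α ∧ IsClassK β ∧
        ∀ p : S × A, α (Astar p) ≤ Ahat p ∧ Ahat p ≤ β (Astar p)) ↔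
      (∀ s : S, {a : A | Ahat (s, a) = 0} = {a : A | Astar (s, a) = 0}) := by
  classical
  constructor
  · rintro ⟨α, β, ⟨hα0, hαmono⟩, ⟨hβ0, hβmono⟩, h⟩ s
    ext a
    simp only [Set.mem_setOf_eq]
    constructor
    · intro hA
      by_contra hne
      have hpos : 0 < Astar (s, a) :=
        lt_of_le_of_ne (hAstar_nonneg _) (Ne.symm hne)
      have h1 : α 0 < α (Astar (s, a)) :=
        hαmono (le_refl (0 : ℝ)) (hAstar_nonneg _) hpos
      rw [hα0] at h1
      have := (h (s, a)).1
      rw [hA] at this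
      linarith
    · intro hA
      have h2 := (h (s, a)).2
      rw [hA, hβ0] at h2
      exact le_antisymm h2 (hAhat_nonneg _)
  · intro hzero
    have hiff : ∀ p : S × A, (Ahat p = 0 ↔ Astar p = 0) := by
      rintro ⟨s, a⟩
      have := Set.ext_iff.mp (hzero s) a
      simpa using this
    -- a point where Astar vanishes
    obtain ⟨a0, ha0⟩ := hAstar_zero (Classical.arbitrary S)
    set p0 : S × A := (Classical.arbitrary S, a0) with hp0
    have hp0z : Astar p0 = 0 := ha0
    -- maximum of Astar
    obtain ⟨pR, -, hpR⟩ := isCompact_univ.exists_isMaxOn Set.univ_nonempty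
      hAstar_cont.continuousOn
    set R := Astar pR with hRdef
    have hRmax : ∀ p : S × A, Astar p ≤ R := fun p => hpR (Set.mem_univ p)
    have hR0 : 0 ≤ R := hAstar_nonneg pR
    have hbddA : BddAbove (Set.range Ahat) := (isCompact_range hAhat_cont).bddAbove
    -- construction of β
    set M : ℝ → ℝ := fun r => sSup (Ahat '' {p | Astar p ≤ max r 0}) with hM
    have hMne : ∀ r : ℝ, (Ahat '' {p | Astar p ≤ max r 0}).Nonempty := by
      intro r
      exact ⟨Ahat p0, Set.mem_image_of_mem _ (by simp [hp0z, le_max_right])⟩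
    have hMbdd : ∀ r : ℝ, BddAbove (Ahat '' {p | Astar p ≤ max r 0}) := by
      intro r
      exact hbddA.mono (Set.image_subset_range _ _)
    have hMmono : ∀ r1 r2 : ℝ, r1 ≤ r2 → M r1 ≤ M r2 := by
      intro r1 r2 h12
      apply csSup_le_csSup (hMbdd r2) (hMne r1)
      apply Set.image_mono
      intro p hp
      exact le_trans hp (max_le_max h12 le_rfl)
    have hM0 : M 0 = 0 := by
      apply le_antisymm
      · apply csSup_le (hMne 0)
        rintro x ⟨p, hp, rfl⟩
        have hz : Astar p = 0 := le_antisymm (by simpa using hp) (hAstar_nonneg p)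
        exact le_of_eq ((hiff p).mpr hz)
      · apply le_csSup (hMbdd 0)
        refine ⟨p0, by simp [hp0z], ?_⟩
        exact (hiff p0).mpr hp0z
    have hβ : ∀ p : S × A, Ahat p ≤ M (Astar p) + Astar p := by
      intro p
      have h1 : Ahat p ≤ M (Astar p) := by
        apply le_csSup (hMbdd _)
        exact Set.mem_image_of_mem _
          (show Astar p ≤ max (Astar p) 0 from le_max_left _ _)
      linarith [hAstar_nonneg p]
    have hβK : IsClassK (fun r => M r + r) := by
      refine ⟨by simpa using hM0, ?_⟩
      intro x _ y _ hxy
      have := hMmono x y hxy.le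
      simp only
      linarith
    -- construction of α, case split on R = 0
    by_cases hRzero : R = 0
    · refine ⟨id, fun r => M r + r, ⟨rfl, fun a _ b _ h => h⟩, hβK, ?_⟩
      intro p
      have hz : Astar p = 0 := le_antisymm (hRzero ▸ hRmax p) (hAstar_nonneg p)
      refine ⟨?_, hβ p⟩
      simp [hz, hAhat_nonneg p]
    · have hRpos : 0 < R := lt_of_le_of_ne hR0 (Ne.symm hRzero)
      set m : ℝ → ℝ := fun t => sInf (Ahat '' {p | min t R ≤ Astar p}) with hm
      have hmne : ∀ t : ℝ, (Ahat '' {p | min t R ≤ Astar p}).Nonempty := by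
        intro t
        exact ⟨Ahat pR, Set.mem_image_of_mem _ (by simp [← hRdef, min_le_right])⟩
      have hmbdd : ∀ t : ℝ, BddBelow (Ahat '' {p | min t R ≤ Astar p}) := by
        intro t
        refine ⟨0, ?_⟩
        rintro x ⟨p, -, rfl⟩
        exact hAhat_nonneg p
      have hmmono : ∀ t1 t2 : ℝ, t1 ≤ t2 → m t1 ≤ m t2 := by
        intro t1 t2 h12
        apply csInf_le_csInf (hmbdd t1) (hmne t2)
        apply Set.image_mono
        intro p hp
        exact le_trans (min_le_min h12 le_rfl) hp
      have hmnonneg : ∀ t : ℝ, 0 ≤ m t := by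
        intro t
        apply le_csInf (hmne t)
        rintro x ⟨p, -, rfl⟩
        exact hAhat_nonneg p
      have hmpos : ∀ t : ℝ, 0 < t → 0 < m t := by
        intro t ht
        have hKc : IsCompact {p : S × A | min t R ≤ Astar p} :=
          (isClosed_le continuous_const hAstar_cont).isCompact
        have himg : IsCompact (Ahat '' {p : S × A | min t R ≤ Astar p}) :=
          hKc.image hAhat_cont
        have hmem := himg.sInf_mem (hmne t)
        obtain ⟨q, hq, hqe⟩ := hmem
        show (0 : ℝ) < sInf (Ahat '' {p | min t R ≤ Astar p})
        rw [← hqe]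
        rcases lt_or_eq_of_le (hAhat_nonneg q) with h | h
        · exact h
        · exfalso
          have hz : Astar q = 0 := (hiff q).mp h.symm
          have : min t R ≤ (0 : ℝ) := hz ▸ hq
          have : (0 : ℝ) < min t R := lt_min ht hRpos
          linarith
      have hkey : ∀ p : S × A, m (Astar p) ≤ Ahat p := by
        intro p
        apply csInf_le (hmbdd _)
        exact Set.mem_image_of_mem _
          (show min (Astar p) R ≤ Astar p from min_le_left _ _)
      refine ⟨fun r => (r / (r + 1)) * m r, fun r => M r + r, ?_, hβK, ?_⟩
      · constructor
        · simp
        · intro x hx y hy hxy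
          simp only [Set.mem_Ici] at hx hy
          have hx1 : (0 : ℝ) < x + 1 := by linarith
          have hy1 : (0 : ℝ) < y + 1 := by linarith
          have hf : x / (x + 1) < y / (y + 1) := by
            rw [div_lt_div_iff₀ hx1 hy1]
            nlinarith
          have hfy : 0 ≤ y / (y + 1) := div_nonneg hy (by linarith)
          rcases eq_or_lt_of_le hx with h | h
          · have hy' : 0 < y := h ▸ hxy
            have : x / (x + 1) = 0 := by rw [← h]; simp
            simp only [this, zero_mul]
            exact mul_pos (div_pos hy' (by linarith)) (hmpos y hy')
          · calc x / (x + 1) * m x < y / (y + 1) * m x :=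
                  mul_lt_mul_of_pos_right hf (hmpos x h)
              _ ≤ y / (y + 1) * m y :=
                  mul_le_mul_of_nonneg_left (hmmono x y hxy.le) hfy
      · intro p
        refine ⟨?_, hβ p⟩
        set r := Astar p with hr
        have hrn : 0 ≤ r := hAstar_nonneg p
        have hf1 : r / (r + 1) ≤ 1 := by
          rw [div_le_one (by linarith)]
          linarith
        calc r / (r + 1) * m r ≤ 1 * m r :=
              mul_le_mul_of_nonneg_right hf1 (hmnonneg r)
          _ = m r := one_mul _
          _ ≤ Ahat p := hkey p
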